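/- Identify M_{nm}(ℂ) with M_n(ℂ) ⊗ M_m(ℂ) and let A = M_n(ℂ) ⊗ 1. If there exists a unitary u ∈ M_{nm}(ℂ) such that A and uAu* are mutually orthogonal (with respect to the normalized trace τ = Tr/(nm)), then m ≥ n. -/

import Mathlib

open Matrix

/-- The normalized trace `τ = Tr/(nm)` on `M_{nm}(ℂ) = M_n(ℂ) ⊗ M_m(ℂ)`, realized as
`n×n` matrices with `m×m` matrix entries: `τ(x) = (1/(nm)) Σ_i Tr(x_{ii})`. -/
noncomputable def tauNM (n m : ℕ)
    (x : Matrix (Fin n) (Fin n) (Matrix (Fin m) (Fin m) ℂ)) : ℂ :=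
  ((n * m : ℕ) : ℂ)⁻¹ * ∑ i, (x i i).trace

/-- The embedding `a ↦ a ⊗ 1` of `M_n(ℂ)` into `M_{nm}(ℂ) = M_n(ℂ) ⊗ M_m(ℂ)`,
whose image is the subalgebra `A = M_n(ℂ) ⊗ 1`. -/
noncomputable def inclA (n m : ℕ) (a : Matrix (Fin n) (Fin n) ℂ) :
    Matrix (Fin n) (Fin n) (Matrix (Fin m) (Fin m) ℂ) :=
  a.map (algebraMap ℂ (Matrix (Fin m) (Fin m) ℂ))

/-- `tauNM` as a linear map. -/
noncomputable def tauL (n m : ℕ) :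
    Matrix (Fin n) (Fin n) (Matrix (Fin m) (Fin m) ℂ) →ₗ[ℂ] ℂ where
  toFun := tauNM n m
  map_add' x y := by
    simp [tauNM, Matrix.add_apply, Finset.sum_add_distrib, mul_add]
  map_smul' c x := by
    simp only [tauNM, Matrix.smul_apply, Matrix.trace_smul, smul_eq_mul,
      RingHom.id_apply, ← Finset.mul_sum]
    ring

lemma tauNM_mul_comm {n m : ℕ}
    (x y : Matrix (Fin n) (Fin n) (Matrix (Fin m) (Fin m) ℂ)) :
    tauNM n m (x * y) = tauNM n m (y * x) := by
  unfold tauNM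
  congr 1
  simp only [Matrix.mul_apply, Matrix.trace_sum]
  rw [Finset.sum_comm]
  exact Finset.sum_congr rfl fun j _ => Finset.sum_congr rfl fun i _ =>
    Matrix.trace_mul_comm _ _

lemma inclA_mul {n m : ℕ} (a b : Matrix (Fin n) (Fin n) ℂ) :
    inclA n m (a * b) = inclA n m a * inclA n m b := by
  simp [inclA, Matrix.map_mul]

lemma tau_inclA {n m : ℕ} (hn : 0 < n) (hm : 0 < m) (a : Matrix (Fin n) (Fin n) ℂ) :
    tauNM n m (inclA n m a) = (n : ℂ)⁻¹ * a.trace := by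
  have key : ∀ i, ((inclA n m a) i i).trace = (m : ℂ) * a i i := by
    intro i
    simp [inclA, Matrix.map_apply, Algebra.algebraMap_eq_smul_one, mul_comm]
  have hm' : (m : ℂ) ≠ 0 := Nat.cast_ne_zero.mpr hm.ne'
  have hn' : (n : ℂ) ≠ 0 := Nat.cast_ne_zero.mpr hn.ne'
  have htr : a.trace = ∑ i, a i i := rfl
  simp only [tauNM, key, ← Finset.mul_sum, htr, Nat.cast_mul]
  field_simp

lemma trace_stdBasis {n : ℕ} (a b : Fin n) :
    (Matrix.single a b (1 : ℂ)).trace = if a = b then 1 else 0 := by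
  by_cases h : a = b
  · subst h; simp [Matrix.trace_single_eq_same]
  · simp [Matrix.trace_single_eq_of_ne (h := h), h]

/-- Identify `M_{nm}(ℂ)` with `M_n(ℂ) ⊗ M_m(ℂ)` and let
`A = M_n(ℂ) ⊗ 1`. If there exists a unitary `u ∈ M_{nm}(ℂ)` such that `A` and `uAu*`
are mutually orthogonal with respect to `τ = Tr/(nm)`, then `m ≥ n`. -/
theorem le_of_exists_mutually_orthogonal_conjugate
    {n m : ℕ} (hn : 0 < n) (hm : 0 < m)
    (h : ∃ u : Matrix (Fin n) (Fin n) (Matrix (Fin m) (Fin m) ℂ),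
      star u * u = 1 ∧ u * star u = 1 ∧
        ∀ a b : Matrix (Fin n) (Fin n) ℂ,
          tauNM n m (inclA n m a * (u * inclA n m b * star u)) =
            tauNM n m (inclA n m a) * tauNM n m (u * inclA n m b * star u)) :
    n ≤ m := by
  classical
  obtain ⟨u, hu1, hu2, horth⟩ := h
  have hcancel : ∀ x : Matrix (Fin n) (Fin n) (Matrix (Fin m) (Fin m) ℂ),
      star u * (u * x) = x := by
    intro x; rw [← Matrix.mul_assoc, hu1, Matrix.one_mul]
  have step1 : ∀ a b : Matrix (Fin n) (Fin n) ℂ,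
      (u * inclA n m a * star u) * (u * inclA n m b * star u)
        = u * inclA n m (a * b) * star u := by
    intro a b
    rw [inclA_mul]
    simp only [Matrix.mul_assoc, hcancel]
  have tau_conj : ∀ x : Matrix (Fin n) (Fin n) (Matrix (Fin m) (Fin m) ℂ),
      tauNM n m (u * x * star u) = tauNM n m x := by
    intro x
    rw [tauNM_mul_comm, ← Matrix.mul_assoc, hu1, Matrix.one_mul]
  have main : ∀ a b c d : Matrix (Fin n) (Fin n) ℂ,
      tauNM n m ((u * inclA n m a * star u * inclA n m b)
          * (inclA n m c * (u * inclA n m d * star u)))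
        = ((n : ℂ)⁻¹ * (b * c).trace) * ((n : ℂ)⁻¹ * (d * a).trace) := by
    intro a b c d
    have h1 : (u * inclA n m a * star u * inclA n m b)
          * (inclA n m c * (u * inclA n m d * star u))
        = (u * inclA n m a * star u)
          * (inclA n m (b * c) * (u * inclA n m d * star u)) := by
      rw [inclA_mul]
      simp only [Matrix.mul_assoc]
    rw [h1, tauNM_mul_comm, Matrix.mul_assoc, step1 d a, horth, tau_conj,
      tau_inclA hn hm, tau_inclA hn hm]
  have key : ∀ s t : (Fin n × Fin n) × (Fin n × Fin n),
      tauNM n m ((u * inclA n m (Matrix.single t.2.2 t.2.1 (1:ℂ)) * star u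
          * inclA n m (Matrix.single t.1.2 t.1.1 (1:ℂ)))
        * (inclA n m (Matrix.single s.1.1 s.1.2 (1:ℂ))
          * (u * inclA n m (Matrix.single s.2.1 s.2.2 (1:ℂ)) * star u)))
        = if s = t then ((n : ℂ) * n)⁻¹ else 0 := by
    rintro ⟨⟨i, j⟩, k, l⟩ ⟨⟨i', j'⟩, k', l'⟩
    rw [main]
    have t1 : (Matrix.single j' i' (1:ℂ) * Matrix.single i j (1:ℂ)).trace
        = if i = i' ∧ j = j' then 1 else 0 := by
      by_cases hii : i' = i
      · subst hii
        rw [Matrix.single_mul_single_same, one_mul, trace_stdBasis]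
        by_cases hj : j' = j
        · subst hj; simp
        · have hj' : ¬(j = j') := fun hh => hj hh.symm
          simp [hj, hj']
      · rw [Matrix.single_mul_single_of_ne (h := hii), Matrix.trace_zero]
        have hii' : ¬(i = i') := fun hh => hii hh.symm
        simp [hii']
    have t2 : (Matrix.single k l (1:ℂ) * Matrix.single l' k' (1:ℂ)).trace
        = if k = k' ∧ l = l' then 1 else 0 := by
      by_cases hll : l = l'
      · subst hll
        rw [Matrix.single_mul_single_same, one_mul, trace_stdBasis]
        by_cases hk : k = k' <;> simp [hk]
      · rw [Matrix.single_mul_single_of_ne (h := hll), Matrix.trace_zero]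
        simp [hll]
    rw [t1, t2]
    by_cases h1 : i = i' ∧ j = j' <;> by_cases h2 : k = k' ∧ l = l' <;>
      simp [h1, h2, Prod.ext_iff, mul_inv]
  have hli : LinearIndependent ℂ (fun s : (Fin n × Fin n) × (Fin n × Fin n) =>
      inclA n m (Matrix.single s.1.1 s.1.2 (1:ℂ))
        * (u * inclA n m (Matrix.single s.2.1 s.2.2 (1:ℂ)) * star u)) := by
    rw [Fintype.linearIndependent_iff]
    intro c hc t
    set w := u * inclA n m (Matrix.single t.2.2 t.2.1 (1:ℂ)) * star u
        * inclA n m (Matrix.single t.1.2 t.1.1 (1:ℂ)) with hw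
    let φ : Matrix (Fin n) (Fin n) (Matrix (Fin m) (Fin m) ℂ) →ₗ[ℂ] ℂ :=
      (tauL n m).comp (LinearMap.mulLeft ℂ w)
    have hφ : ∀ x, φ x = tauNM n m (w * x) := fun x => rfl
    have key' : ∀ s : (Fin n × Fin n) × (Fin n × Fin n),
        tauNM n m (w * (inclA n m (Matrix.single s.1.1 s.1.2 (1:ℂ))
          * (u * inclA n m (Matrix.single s.2.1 s.2.2 (1:ℂ)) * star u)))
          = if s = t then ((n : ℂ) * n)⁻¹ else 0 := fun s => by
      rw [hw]; exact key s t
    have h0 := congrArg φ hc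
    rw [map_sum, map_zero] at h0
    simp only [_root_.map_smul] at h0
    simp only [smul_eq_mul, hφ, key', mul_ite, mul_zero,
      Finset.sum_ite_eq', Finset.mem_univ, if_true] at h0
    have hn' : ((n : ℂ) * n)⁻¹ ≠ 0 := by
      simp [Nat.cast_ne_zero.mpr hn.ne']
    exact (mul_eq_zero.mp h0).resolve_right hn'
  have hcard := hli.fintype_card_le_finrank
  rw [Module.finrank_matrix, Module.finrank_matrix, Module.finrank_self] at hcard
  simp only [Fintype.card_prod, Fintype.card_fin, mul_one] at hcard
  have h2 : n * n ≤ m * m := Nat.le_of_mul_le_mul_left hcard (Nat.mul_pos hn hn)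
  by_contra hlt
  push_neg at hlt
  nlinarith
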